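/- Let μ be a finite measure on a measurable space, H a real Hilbert space, T : H → L²(μ) a compact continuous linear map, Y a real normed vector space, and F : L¹(μ) → Y a continuous map. Fix ε > 0, α > 0, y ∈ Y and φ₀ ∈ H. Then the Tikhonov functional F_{ε,α}(φ) := ‖F(P_ε ∘ (Tφ)) − y‖²_Y + α‖φ − φ₀‖²_H attains a global minimizer on H, i.e. there exists φ* ∈ H with F_{ε,α}(φ*) ≤ F_{ε,α}(φ) for all φ ∈ H. -/

import Mathlib

open MeasureTheory Filter Topology

noncomputable section

/-- The smoothed level set projection `P_ε`. -/
def Pe (ε t : ℝ) : ℝ := max 0 (min 1 (1 + t / ε))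

/-- The level set projection `P` (Heaviside function, `P t = 1` iff `0 ≤ t`). -/
def Pstep (t : ℝ) : ℝ := if 0 ≤ t then 1 else 0

lemma Pe_continuous (ε : ℝ) : Continuous (Pe ε) :=
  continuous_const.max (continuous_const.min (continuous_const.add (continuous_id.div_const ε)))

lemma Pe_bound (ε t : ℝ) : ‖Pe ε t‖ ≤ 1 := by
  unfold Pe
  rw [Real.norm_eq_abs, abs_le]
  refine ⟨by linarith [le_max_left (0:ℝ) (min 1 (1 + t / ε))], ?_⟩
  exact max_le (by norm_num) (min_le_left _ _)

lemma Pstep_measurable : Measurable Pstep :=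
  Measurable.ite measurableSet_Ici measurable_const measurable_const

lemma Pstep_bound (t : ℝ) : ‖Pstep t‖ ≤ 1 := by
  unfold Pstep; split <;> simp

variable {X : Type*} [MeasurableSpace X] (μ : Measure X) [IsFiniteMeasure μ]

/-- Composition `P_ε ∘ f` of the smoothed projection with an `L²` function, as an
element of `L¹` (the measure being finite). -/
def compPe (ε : ℝ) (f : Lp ℝ 2 μ) : Lp ℝ 1 μ :=
  (MemLp.of_bound ((Pe_continuous ε).comp_aestronglyMeasurable (Lp.aestronglyMeasurable f)) 1
    (Eventually.of_forall fun x => Pe_bound ε (f x))).toLp _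

/-- Composition `P ∘ f` of the discontinuous projection with an `L²` function, as an
element of `L¹`. -/
def compP (f : Lp ℝ 2 μ) : Lp ℝ 1 μ :=
  (MemLp.of_bound
    (Pstep_measurable.comp_aemeasurable (Lp.aestronglyMeasurable f).aemeasurable).aestronglyMeasurable 1
    (Eventually.of_forall fun x => Pstep_bound (f x))).toLp _

/-- A pair `(z, φ) ∈ L¹ × L²` is admissible if `z` is the `L¹` limit of `P_{ε_k} ∘ φ_k`
for some positive `ε_k → 0` and some `φ_k → φ` in `L²`. -/
def Admissible (z : Lp ℝ 1 μ) (φ : Lp ℝ 2 μ) : Prop :=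
  ∃ (εs : ℕ → ℝ) (φs : ℕ → Lp ℝ 2 μ),
    (∀ k, 0 < εs k) ∧ Tendsto εs atTop (𝓝 0) ∧
    Tendsto φs atTop (𝓝 φ) ∧
    Tendsto (fun k => compPe μ (εs k) (φs k)) atTop (𝓝 z)


lemma Pe_lip {ε : ℝ} (hε : 0 < ε) (s t : ℝ) : |Pe ε s - Pe ε t| ≤ ε⁻¹ * |s - t| := by
  unfold Pe
  calc |max 0 (min 1 (1 + s / ε)) - max 0 (min 1 (1 + t / ε))|
      = |max (min 1 (1 + s / ε)) 0 - max (min 1 (1 + t / ε)) 0| := by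
        rw [max_comm, max_comm (min 1 (1 + t / ε))]
    _ ≤ |min 1 (1 + s / ε) - min 1 (1 + t / ε)| := abs_max_sub_max_le_abs _ _ _
    _ ≤ max |1 - 1| |(1 + s / ε) - (1 + t / ε)| := abs_min_sub_min_le_max _ _ _ _
    _ ≤ ε⁻¹ * |s - t| := by
        have h : (1 + s / ε) - (1 + t / ε) = ε⁻¹ * (s - t) := by
          field_simp
          ring
        rw [sub_self, abs_zero, h, abs_mul, abs_of_pos (inv_pos.2 hε)]
        exact max_le (by positivity) le_rfl

lemma compPe_coeFn (ε : ℝ) (f : Lp ℝ 2 μ) :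
    ⇑(compPe μ ε f) =ᵐ[μ] fun x => Pe ε (f x) := by
  exact MemLp.coeFn_toLp _

lemma compPe_cont {ε : ℝ} (hε : 0 < ε) : Continuous (compPe μ ε) := by
  have hKne : ENNReal.ofReal ε⁻¹ * μ Set.univ ^ (2:ℝ)⁻¹ ≠ ⊤ :=
    ENNReal.mul_ne_top ENNReal.ofReal_ne_top
      (ENNReal.rpow_ne_top_of_nonneg (by norm_num) (measure_ne_top μ _))
  set K := (ENNReal.ofReal ε⁻¹ * μ Set.univ ^ (2:ℝ)⁻¹).toNNReal with hK
  refine LipschitzWith.continuous (K := K) ?_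
  intro f g
  have hcoe : ⇑(compPe μ ε f) - ⇑(compPe μ ε g) =ᵐ[μ]
      fun x => Pe ε (f x) - Pe ε (g x) := by
    filter_upwards [compPe_coeFn μ ε f, compPe_coeFn μ ε g] with x h1 h2
    simp only [Pi.sub_apply, h1, h2]
  rw [Lp.edist_def, eLpNorm_congr_ae hcoe]
  have hmono : eLpNorm (fun x => Pe ε (f x) - Pe ε (g x)) 1 μ ≤
      eLpNorm (ε⁻¹ • (⇑f - ⇑g)) 1 μ := by
    apply eLpNorm_mono
    intro x
    simp only [Pi.smul_apply, Pi.sub_apply, smul_eq_mul, Real.norm_eq_abs, abs_mul,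
      abs_of_pos (inv_pos.2 hε)]
    exact Pe_lip hε _ _
  have hsmul : eLpNorm (ε⁻¹ • (⇑f - ⇑g)) 1 μ = ENNReal.ofReal ε⁻¹ * eLpNorm (⇑f - ⇑g) 1 μ := by
    rw [eLpNorm_const_smul]
    congr 1
    rw [← Real.enorm_eq_ofReal (le_of_lt (inv_pos.2 hε))]
  have hcmp : eLpNorm (⇑f - ⇑g) 1 μ ≤ eLpNorm (⇑f - ⇑g) 2 μ * μ Set.univ ^ (2:ℝ)⁻¹ := by
    have h := eLpNorm_le_eLpNorm_mul_rpow_measure_univ (p := 1) (q := 2) (by norm_num)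
      ((Lp.aestronglyMeasurable f).sub (Lp.aestronglyMeasurable g))
    convert h using 2
    norm_num
  have hfg : eLpNorm (⇑f - ⇑g) 2 μ = edist f g := by
    rw [Lp.edist_def]
  calc eLpNorm (fun x => Pe ε (f x) - Pe ε (g x)) 1 μ
      ≤ ENNReal.ofReal ε⁻¹ * eLpNorm (⇑f - ⇑g) 1 μ := hsmul ▸ hmono
    _ ≤ ENNReal.ofReal ε⁻¹ * (eLpNorm (⇑f - ⇑g) 2 μ * μ Set.univ ^ (2:ℝ)⁻¹) :=
        mul_le_mul_right hcmp _
    _ = (ENNReal.ofReal ε⁻¹ * μ Set.univ ^ (2:ℝ)⁻¹) * edist f g := by rw [hfg]; ring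
    _ = K * edist f g := by rw [hK, ENNReal.coe_toNNReal hKne]


lemma exists_mem_closure_convexHull_tails {H : Type*} [NormedAddCommGroup H]
    [InnerProductSpace ℝ H] [CompleteSpace H] (u : ℕ → H) (R : ℝ) (hR : ∀ n, ‖u n‖ ≤ R) :
    ∃ p : H, ∀ n, p ∈ closure (convexHull ℝ (u '' Set.Ici n)) := by
  set C : ℕ → Set H := fun n => closure (convexHull ℝ (u '' Set.Ici n)) with hC
  have hmem : ∀ n, u n ∈ C n := fun n =>
    subset_closure (subset_convexHull _ _ ⟨n, Set.mem_Ici.2 le_rfl, rfl⟩)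
  have hCne : ∀ n, (C n).Nonempty := fun n => ⟨u n, hmem n⟩
  have hCconv : ∀ n, Convex ℝ (C n) := fun n => (convex_convexHull _ _).closure
  have hCcl : ∀ n, IsClosed (C n) := fun n => isClosed_closure
  have hmono : ∀ {n m : ℕ}, n ≤ m → C m ⊆ C n := by
    intro n m h
    exact closure_mono (convexHull_mono (Set.image_mono (Set.Ici_subset_Ici.2 h)))
  -- each C n lies in the closed ball of radius R
  have hball : ∀ n, ∀ x ∈ C n, ‖x‖ ≤ R := by
    intro n x hx
    have : C n ⊆ Metric.closedBall 0 R := by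
      apply closure_minimal _ Metric.isClosed_closedBall
      apply convexHull_min _ (convex_closedBall _ _)
      rintro - ⟨k, -, rfl⟩
      simpa [Metric.mem_closedBall, dist_eq_norm] using hR k
    simpa [Metric.mem_closedBall, dist_eq_norm] using this hx
  -- distance function
  have hproj : ∀ n, ∃ v ∈ C n, ‖(0:H) - v‖ = ⨅ w : C n, ‖(0:H) - w‖ := fun n =>
    exists_norm_eq_iInf_of_complete_convex (hCne n) ((hCcl n).isComplete) (hCconv n) 0
  choose v hvmem hvnorm using hproj
  set d : ℕ → ℝ := fun n => ⨅ w : C n, ‖(w : H)‖ with hd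
  haveI : ∀ n, Nonempty (C n) := fun n => (hCne n).to_subtype
  have hbdd : ∀ n, BddBelow (Set.range fun w : C n => ‖(w : H)‖) :=
    fun n => ⟨0, Set.forall_mem_range.2 fun _ => norm_nonneg _⟩
  have hdle : ∀ n, ∀ w ∈ C n, d n ≤ ‖w‖ := by
    intro n w hw
    exact ciInf_le (hbdd n) (⟨w, hw⟩ : C n)
  have hvn : ∀ n, ‖v n‖ = d n := by
    intro n
    have := hvnorm n
    simp only [zero_sub, norm_neg] at this
    exact this
  have hdnonneg : ∀ n, 0 ≤ d n := fun n => by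
    rw [← hvn n]; exact norm_nonneg _
  have hdmono : Monotone d := by
    intro n m h
    refine le_ciInf fun w => ?_
    simpa using hdle n w (hmono h w.2)
  have hdboundR : ∀ n, d n ≤ R := fun n => (hdle n (u n) (hmem n)).trans (hR n)
  set D : ℝ := ⨆ n, d n with hD
  have hdD : Tendsto d atTop (𝓝 D) :=
    tendsto_atTop_ciSup hdmono ⟨R, Set.forall_mem_range.2 hdboundR⟩
  have hdleD : ∀ n, d n ≤ D := fun n =>
    le_ciSup ⟨R, Set.forall_mem_range.2 hdboundR⟩ n
  -- Cauchy estimate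
  have key : ∀ N n m : ℕ, N ≤ n → N ≤ m → n ≤ m →
      ‖v n - v m‖ ^ 2 ≤ 2 * (D ^ 2 - d N ^ 2) := by
    intro N n m hNn hNm hnm
    have hmid : (1/2 : ℝ) • v n + (1/2 : ℝ) • v m ∈ C n :=
      (hCconv n) (hvmem n) (hmono hnm (hvmem m)) (by norm_num) (by norm_num) (by norm_num)
    have h1 : d n ≤ ‖(1/2 : ℝ) • v n + (1/2 : ℝ) • v m‖ := hdle n _ hmid
    have h2 : ‖(1/2 : ℝ) • v n + (1/2 : ℝ) • v m‖ = (1/2) * ‖v n + v m‖ := by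
      rw [← smul_add, norm_smul]; simp
    have hpar := parallelogram_law_with_norm ℝ (v n) (v m)
    rw [hvn n, hvn m] at hpar
    have hdn : d N ≤ d n := hdmono hNn
    have hdm : d m ≤ D := hdleD m
    have h3 : 2 * d n ≤ ‖v n + v m‖ := by
      have := h1.trans_eq h2
      nlinarith
    have h4 : (2 * d n) * (2 * d n) ≤ ‖v n + v m‖ * ‖v n + v m‖ :=
      mul_self_le_mul_self (by linarith [hdnonneg n]) h3
    nlinarith [h4, mul_self_le_mul_self (hdnonneg N) hdn, mul_self_le_mul_self (hdnonneg m) hdm]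
  have hb0 : Tendsto (fun N => Real.sqrt (2 * (D ^ 2 - d N ^ 2))) atTop (𝓝 0) := by
    have : Tendsto (fun N => 2 * (D ^ 2 - d N ^ 2)) atTop (𝓝 (2 * (D ^ 2 - D ^ 2))) :=
      (tendsto_const_nhds.sub ((hdD.pow 2))).const_mul 2
    have h := (Real.continuous_sqrt.tendsto 0).comp (by simpa using this)
    simpa only [Function.comp_def, Real.sqrt_zero] using h
  have hcauchy : CauchySeq v := by
    apply cauchySeq_of_le_tendsto_0 (fun N => Real.sqrt (2 * (D ^ 2 - d N ^ 2))) _ hb0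
    intro n m N hn hm
    rcases le_total n m with h | h
    · have := key N n m hn hm h
      rw [dist_eq_norm]
      calc ‖v n - v m‖ = Real.sqrt (‖v n - v m‖ ^ 2) := by
            rw [Real.sqrt_sq (norm_nonneg _)]
        _ ≤ _ := Real.sqrt_le_sqrt this
    · have := key N m n hm hn h
      rw [dist_eq_norm, norm_sub_rev]
      calc ‖v m - v n‖ = Real.sqrt (‖v m - v n‖ ^ 2) := by
            rw [Real.sqrt_sq (norm_nonneg _)]
        _ ≤ _ := Real.sqrt_le_sqrt this
  obtain ⟨p, hp⟩ := cauchySeq_tendsto_of_complete hcauchy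
  refine ⟨p, fun n => ?_⟩
  refine (hCcl n).mem_of_tendsto hp ?_
  filter_upwards [eventually_ge_atTop n] with m hm
  exact hmono hm (hvmem m)

lemma le_of_forall_pos_le_add' {a b : ℝ} (h : ∀ δ > 0, a ≤ b + δ) : a ≤ b := by
  by_contra hc
  push_neg at hc
  have := h ((a - b)/2) (by linarith)
  linarith

/-- **Theorem 2.1** (existence of a minimizer of the smoothed Tikhonov functional).
For a finite measure `μ`, a compact continuous linear map `T` from a real Hilbert
space `H` into `L²(μ)`, a continuous map `F : L¹(μ) → Y`, and parameters
`ε, α > 0`, the functional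
`φ ↦ ‖F(P_ε ∘ (Tφ)) − y‖² + α‖φ − φ₀‖²` attains a global minimizer on `H`. -/
theorem tikhonov_smoothed_attains_minimizer
    {X : Type*} [MeasurableSpace X] (μ : Measure X) [IsFiniteMeasure μ]
    {H : Type*} [NormedAddCommGroup H] [InnerProductSpace ℝ H] [CompleteSpace H]
    {Y : Type*} [NormedAddCommGroup Y] [NormedSpace ℝ Y]
    (T : H →L[ℝ] Lp ℝ 2 μ) (hT : IsCompactOperator T)
    (F : Lp ℝ 1 μ → Y) (hF : Continuous F)
    (ε α : ℝ) (hε : 0 < ε) (hα : 0 < α) (y : Y) (φ₀ : H) :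
    ∃ φstar : H, ∀ φ : H,
      ‖F (compPe μ ε (T φstar)) - y‖ ^ 2 + α * ‖φstar - φ₀‖ ^ 2 ≤
      ‖F (compPe μ ε (T φ)) - y‖ ^ 2 + α * ‖φ - φ₀‖ ^ 2 := by
  classical
  haveI : FirstCountableTopology (Lp ℝ 2 μ) := UniformSpace.firstCountableTopology _
  set J : H → ℝ := fun φ => ‖F (compPe μ ε (T φ)) - y‖ ^ 2 + α * ‖φ - φ₀‖ ^ 2 with hJdef
  have hJ0 : ∀ φ, 0 ≤ J φ := fun φ => add_nonneg (sq_nonneg _) (mul_nonneg hα.le (sq_nonneg _))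
  have hbdd : BddBelow (Set.range J) := ⟨0, Set.forall_mem_range.2 hJ0⟩
  set m : ℝ := ⨅ φ, J φ with hm
  have hmle : ∀ φ, m ≤ J φ := fun φ => ciInf_le hbdd φ
  have hseq : ∀ n : ℕ, ∃ φ, J φ < m + 1 / (n + 1) := fun n =>
    exists_lt_of_ciInf_lt (lt_add_of_le_of_pos le_rfl Nat.one_div_pos_of_nat)
  choose u hu using hseq
  have hJu : Tendsto (fun n => J (u n)) atTop (𝓝 m) := by
    have hup : Tendsto (fun n : ℕ => m + 1 / (n + 1)) atTop (𝓝 m) := by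
      have := tendsto_one_div_add_atTop_nhds_zero_nat (𝕜 := ℝ)
      simpa using (tendsto_const_nhds (x := m)).add this
    exact tendsto_of_tendsto_of_tendsto_of_le_of_le tendsto_const_nhds hup
      (fun n => hmle (u n)) (fun n => (hu n).le)
  -- boundedness of the minimizing sequence
  set R : ℝ := Real.sqrt ((m + 1) / α) with hR
  have hub : ∀ n, ‖u n - φ₀‖ ≤ R := by
    intro n
    have h1 : α * ‖u n - φ₀‖ ^ 2 ≤ m + 1 := by
      have h2 : J (u n) < m + 1 / (n + 1) := hu n
      have h3 : (1 : ℝ) / (n + 1) ≤ 1 := by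
        rw [div_le_one (by positivity)]
        simp [Nat.cast_nonneg]
      have h4 : 0 ≤ ‖F (compPe μ ε (T (u n))) - y‖ ^ 2 := sq_nonneg _
      simp only [hJdef] at h2
      linarith
    have h5 : ‖u n - φ₀‖ ^ 2 ≤ (m + 1) / α := by
      rw [le_div_iff₀ hα]
      linarith [h1]
    calc ‖u n - φ₀‖ = Real.sqrt (‖u n - φ₀‖ ^ 2) := by rw [Real.sqrt_sq (norm_nonneg _)]
      _ ≤ R := Real.sqrt_le_sqrt h5
  -- compactness: extract a subsequence with T (u n) convergent
  have hbdd2 : Bornology.IsBounded (Set.range u) := by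
    apply Bornology.IsBounded.subset (Metric.isBounded_closedBall (x := φ₀) (r := R))
    rintro - ⟨n, rfl⟩
    simpa [Metric.mem_closedBall, dist_eq_norm] using hub n
  obtain ⟨Kc, hKc, hTK⟩ := hT.image_subset_compact_of_bounded hbdd2
  have hmemK : ∀ n, T (u n) ∈ Kc := fun n => hTK ⟨u n, ⟨n, rfl⟩, rfl⟩
  obtain ⟨ψ, -, σ₁, hσ₁, hψ⟩ := hKc.tendsto_subseq hmemK
  -- extract a further subsequence with convergent norms
  have hmemI : ∀ n, ‖u (σ₁ n) - φ₀‖ ∈ Set.Icc (0:ℝ) R := fun n =>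
    ⟨norm_nonneg _, hub _⟩
  obtain ⟨L, hLmem, σ₂, hσ₂, hLtend⟩ := (isCompact_Icc (a := (0:ℝ)) (b := R)).tendsto_subseq hmemI
  set w : ℕ → H := fun n => u (σ₁ (σ₂ n)) with hw
  have hw1 : Tendsto (fun n => J (w n)) atTop (𝓝 m) :=
    hJu.comp ((hσ₁.comp hσ₂).tendsto_atTop)
  have hw2 : Tendsto (fun n => T (w n)) atTop (𝓝 ψ) := hψ.comp hσ₂.tendsto_atTop
  have hw3 : Tendsto (fun n => ‖w n - φ₀‖) atTop (𝓝 L) := hLtend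
  -- the candidate minimizer
  have hwb : ∀ n, ‖w n‖ ≤ ‖φ₀‖ + R := fun n => by
    calc ‖w n‖ = ‖φ₀ + (w n - φ₀)‖ := by rw [add_sub_cancel]
      _ ≤ ‖φ₀‖ + ‖w n - φ₀‖ := norm_add_le _ _
      _ ≤ ‖φ₀‖ + R := by linarith [hub (σ₁ (σ₂ n))]
  obtain ⟨p, hp⟩ := exists_mem_closure_convexHull_tails w (‖φ₀‖ + R) hwb
  -- `p` is close to `φ₀`
  have hpnorm : ‖p - φ₀‖ ≤ L := by
    apply le_of_forall_pos_le_add'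
    intro δ hδ
    obtain ⟨N, hN⟩ := (Metric.tendsto_atTop.1 hw3 δ hδ)
    have hsub : closure (convexHull ℝ (w '' Set.Ici N)) ⊆ Metric.closedBall φ₀ (L + δ) := by
      apply closure_minimal _ Metric.isClosed_closedBall
      apply convexHull_min _ (convex_closedBall _ _)
      rintro - ⟨k, hk, rfl⟩
      have := hN k hk
      rw [Real.dist_eq] at this
      have h7 : ‖w k - φ₀‖ ≤ L + δ := by
        cases' abs_lt.1 this with h8 h9
        linarith
      simpa [Metric.mem_closedBall, dist_eq_norm] using h7
    simpa [Metric.mem_closedBall, dist_eq_norm] using hsub (hp N)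
  -- `T p = ψ`
  have hTp : T p = ψ := by
    have hdist : ∀ δ > (0:ℝ), dist (T p) ψ ≤ δ := by
      intro δ hδ
      obtain ⟨N, hN⟩ := (Metric.tendsto_atTop.1 hw2 δ hδ)
      have hsub : closure (convexHull ℝ (w '' Set.Ici N)) ⊆
          ⇑T ⁻¹' Metric.closedBall ψ δ := by
        apply closure_minimal _ (Metric.isClosed_closedBall.preimage T.continuous)
        apply convexHull_min _
          ((convex_closedBall ψ δ).linear_preimage (T : H →ₗ[ℝ] Lp ℝ 2 μ))
        rintro - ⟨k, hk, rfl⟩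
        exact (hN k hk).le
      exact hsub (hp N)
    have : dist (T p) ψ ≤ 0 := le_of_forall_pos_le_add' (by simpa using hdist)
    rw [← dist_le_zero]
    exact this
  -- the value of `m`
  set A : ℝ := ‖F (compPe μ ε ψ) - y‖ ^ 2 with hA
  have hglim : Tendsto (fun n => J (w n)) atTop (𝓝 (A + α * L ^ 2)) := by
    have h1 : Tendsto (fun n => ‖F (compPe μ ε (T (w n))) - y‖ ^ 2) atTop (𝓝 A) := by
      have hc : Continuous fun z : Lp ℝ 2 μ => ‖F (compPe μ ε z) - y‖ ^ 2 :=
        (((hF.comp (compPe_cont μ hε)).sub continuous_const).norm).pow 2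
      exact (hc.tendsto ψ).comp hw2
    have h2 : Tendsto (fun n => α * ‖w n - φ₀‖ ^ 2) atTop (𝓝 (α * L ^ 2)) :=
      (hw3.pow 2).const_mul α
    exact h1.add h2
  have hmeq : m = A + α * L ^ 2 := tendsto_nhds_unique hw1 hglim
  -- conclusion
  refine ⟨p, fun φ => ?_⟩
  have hfinal : J p ≤ m := by
    have : J p = A + α * ‖p - φ₀‖ ^ 2 := by
      simp only [hJdef, hTp, hA]
    rw [this, hmeq]
    have h9 : ‖p - φ₀‖ ^ 2 ≤ L ^ 2 :=
      pow_le_pow_left₀ (norm_nonneg _) hpnorm 2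
    nlinarith
  exact hfinal.trans (hmle φ)
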